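/- Set C₁ = C₂ = C₃ = −1 in the secular spin ODE system and let C₄ ∈ ℝ. Consider equilibrium points (X,h) with X ∈ (−1,1) and sin(h) ≠ 0 (equilibria off the axis sin h = 0). Then: (a) any such off-axis equilibrium satisfies X = 4/(8·C₄ − 7) and cos(h) = −X/(4·√(1−X²)); and (b) an off-axis equilibrium exists if and only if |8·C₄ − 7| > √17, i.e. if and only if C₄ > (7+√17)/8 or C₄ < (7−√17)/8. These thresholds are the two pitchfork bifurcation values of C₄. -/

import Mathlib

/-- Key algebraic lemma: from the equilibrium equations with sin h ≠ 0,
derive the cos h formula and the linear relation for X. -/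
lemma stmt7_aux (C₄ X h : ℝ) (hX : X ∈ Set.Ioo (-1 : ℝ) 1) (hsin : Real.sin h ≠ 0)
    (e1 : Real.sin h * ((-1) * X * Real.sqrt (1 - X ^ 2)
          + 4 * (-1) * Real.cos h * (1 - X ^ 2)) = 0)
    (e2 : (-1) * Real.cos h * (1 - 2 * X ^ 2) / Real.sqrt (1 - X ^ 2)
          - 2 * (-1) * X * Real.cos (2 * h) + (-1) + 2 * C₄ * X = 0) :
    Real.cos h = -X / (4 * Real.sqrt (1 - X ^ 2)) ∧ X * (8 * C₄ - 7) = 4 := by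
  obtain ⟨hX1, hX2⟩ := hX
  have h1 : (0:ℝ) < 1 - X ^ 2 := by nlinarith
  have hspos : 0 < Real.sqrt (1 - X ^ 2) := Real.sqrt_pos.mpr h1
  have hsne : Real.sqrt (1 - X ^ 2) ≠ 0 := hspos.ne'
  have hs2 : Real.sqrt (1 - X ^ 2) ^ 2 = 1 - X ^ 2 := Real.sq_sqrt h1.le
  have e1' : (-1) * X * Real.sqrt (1 - X ^ 2)
      + 4 * (-1) * Real.cos h * (1 - X ^ 2) = 0 :=
    (mul_eq_zero.mp e1).resolve_left hsin
  have hcos : Real.cos h = -X / (4 * Real.sqrt (1 - X ^ 2)) := by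
    rw [eq_div_iff (by positivity)]
    nlinarith [e1', hs2]
  refine ⟨hcos, ?_⟩
  rw [Real.cos_two_mul, hcos] at e2
  field_simp at e2
  have hfac : (16 * Real.sqrt (1 - X ^ 2) ^ 2 * (1 - X ^ 2))
      * (X * (8 * C₄ - 7) - 4) = 0 := by
    linear_combination 4 * (1 - X ^ 2) * e2 + 16 * X * (1 - X ^ 2) * hs2
  have hne : (16 * Real.sqrt (1 - X ^ 2) ^ 2 * (1 - X ^ 2)) ≠ 0 := by positivity
  have := (mul_eq_zero.mp hfac).resolve_left hne
  linarith

theorem stmt_7 (C₄ : ℝ) :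
    (∀ X ∈ Set.Ioo (-1 : ℝ) 1, ∀ h : ℝ, Real.sin h ≠ 0 →
      (Real.sin h * ((-1) * X * Real.sqrt (1 - X ^ 2)
          + 4 * (-1) * Real.cos h * (1 - X ^ 2)) = 0
        ∧ (-1) * Real.cos h * (1 - 2 * X ^ 2) / Real.sqrt (1 - X ^ 2)
          - 2 * (-1) * X * Real.cos (2 * h) + (-1) + 2 * C₄ * X = 0) →
      (X = 4 / (8 * C₄ - 7)
        ∧ Real.cos h = -X / (4 * Real.sqrt (1 - X ^ 2))))
    ∧ ((∃ X ∈ Set.Ioo (-1 : ℝ) 1, ∃ h : ℝ, Real.sin h ≠ 0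
        ∧ Real.sin h * ((-1) * X * Real.sqrt (1 - X ^ 2)
            + 4 * (-1) * Real.cos h * (1 - X ^ 2)) = 0
        ∧ (-1) * Real.cos h * (1 - 2 * X ^ 2) / Real.sqrt (1 - X ^ 2)
            - 2 * (-1) * X * Real.cos (2 * h) + (-1) + 2 * C₄ * X = 0)
      ↔ (Real.sqrt 17 < |8 * C₄ - 7|)) := by
  constructor
  · intro X hX h hsin ⟨e1, e2⟩
    obtain ⟨hcos, hkey⟩ := stmt7_aux C₄ X h hX hsin e1 e2
    refine ⟨?_, hcos⟩
    have hd : 8 * C₄ - 7 ≠ 0 := by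
      intro hd0
      rw [hd0, mul_zero] at hkey
      norm_num at hkey
    field_simp
    linarith [hkey]
  · constructor
    · rintro ⟨X, hX, h, hsin, e1, e2⟩
      obtain ⟨hcos, hkey⟩ := stmt7_aux C₄ X h hX hsin e1 e2
      obtain ⟨hX1, hX2⟩ := hX
      have h1 : (0:ℝ) < 1 - X ^ 2 := by nlinarith
      have hspos : 0 < Real.sqrt (1 - X ^ 2) := Real.sqrt_pos.mpr h1
      have hs2 : Real.sqrt (1 - X ^ 2) ^ 2 = 1 - X ^ 2 := Real.sq_sqrt h1.le
      have hsin2 : 0 < Real.sin h ^ 2 := by positivity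
      have hc2 : Real.cos h ^ 2 < 1 := by
        nlinarith [Real.sin_sq_add_cos_sq h]
      rw [hcos, div_pow] at hc2
      have hc2' : (-X) ^ 2 < (4 * Real.sqrt (1 - X ^ 2)) ^ 2 :=
        (div_lt_one (by positivity)).mp hc2
      have hXsq : 17 * X ^ 2 < 16 := by nlinarith [hs2]
      have hXne : X ≠ 0 := by intro h0; rw [h0] at hkey; norm_num at hkey
      have hd2 : 17 < (8 * C₄ - 7) ^ 2 := by
        nlinarith [hkey, hXsq, sq_nonneg X]
      calc Real.sqrt 17 < Real.sqrt ((8 * C₄ - 7) ^ 2) :=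
            Real.sqrt_lt_sqrt (by norm_num) hd2
        _ = |8 * C₄ - 7| := Real.sqrt_sq_eq_abs _
    · intro hlt
      have hd2 : 17 < (8 * C₄ - 7) ^ 2 := by
        have h17 : Real.sqrt 17 ^ 2 < |8 * C₄ - 7| ^ 2 :=
          pow_lt_pow_left₀ hlt (Real.sqrt_nonneg _) two_ne_zero
        rwa [Real.sq_sqrt (by norm_num : (17:ℝ) ≥ 0), sq_abs] at h17
      have hdne : 8 * C₄ - 7 ≠ 0 := by intro h0; rw [h0] at hd2; norm_num at hd2
      have hdpos : 0 < (8 * C₄ - 7) ^ 2 := by positivity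
      obtain ⟨X, hXd, hXsq⟩ : ∃ X : ℝ, X * (8 * C₄ - 7) = 4 ∧ 17 * X ^ 2 < 16 := by
        refine ⟨4 / (8 * C₄ - 7), by field_simp, ?_⟩
        rw [div_pow, ← mul_div_assoc, div_lt_iff₀ hdpos]
        nlinarith
      have hX1 : -1 < X := by nlinarith [sq_nonneg (X + 1)]
      have hX2 : X < 1 := by nlinarith [sq_nonneg (X - 1)]
      have h1 : (0:ℝ) < 1 - X ^ 2 := by nlinarith
      have hspos : 0 < Real.sqrt (1 - X ^ 2) := Real.sqrt_pos.mpr h1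
      have hsne : Real.sqrt (1 - X ^ 2) ≠ 0 := hspos.ne'
      have hs2 : Real.sqrt (1 - X ^ 2) ^ 2 = 1 - X ^ 2 := Real.sq_sqrt h1.le
      have hc2 : (-X / (4 * Real.sqrt (1 - X ^ 2))) ^ 2 < 1 := by
        rw [div_pow, div_lt_one (by positivity)]
        nlinarith
      have hc1 : -1 < -X / (4 * Real.sqrt (1 - X ^ 2)) := by
        nlinarith [sq_nonneg (-X / (4 * Real.sqrt (1 - X ^ 2)) + 1)]
      have hc1' : -X / (4 * Real.sqrt (1 - X ^ 2)) < 1 := by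
        nlinarith [sq_nonneg (-X / (4 * Real.sqrt (1 - X ^ 2)) - 1)]
      refine ⟨X, ⟨hX1, hX2⟩, Real.arccos (-X / (4 * Real.sqrt (1 - X ^ 2))), ?_, ?_, ?_⟩
      · rw [Real.sin_arccos]
        have : 0 < Real.sqrt (1 - (-X / (4 * Real.sqrt (1 - X ^ 2))) ^ 2) :=
          Real.sqrt_pos.mpr (by nlinarith)
        positivity
      · rw [Real.cos_arccos hc1.le hc1'.le]
        have hb : (-1) * X * Real.sqrt (1 - X ^ 2)
            + 4 * (-1) * (-X / (4 * Real.sqrt (1 - X ^ 2))) * (1 - X ^ 2) = 0 := by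
          field_simp
          linear_combination (-X) * hs2
        rw [hb, mul_zero]
      · rw [Real.cos_two_mul, Real.cos_arccos hc1.le hc1'.le]
        field_simp
        linear_combination 4 * (1 - X ^ 2) * hXd + (32 * C₄ * X - 32 * X - 16) * hs2
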